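/- Let (Λ, d, ν) be a compact metric measure space with ν a finite positive Borel measure, and let Y be a topological space with Λ embedded as a subspace of a compactification Ȳ of an open set Y (so Ȳ = Y ∪ Λ). Suppose K : Y × Λ → ℝ is a continuous Dirac–Weierstrass family: K ≥ 0, ∫_Λ K(y,v) dν(v) = 1 for all y ∈ Y, and for every v₀ ∈ Λ and r > 0, ∫_{Λ \ B(v₀,r)} K(y,v) dν(v) → 0 as y → v₀. Then for every continuous f : Λ → ℂ, the function on Ȳ equal to ∫_Λ f(v) K(y,v) dν(v) for y ∈ Y and to f(y) for y ∈ Λ is continuous on Ȳ. -/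

import Mathlib

open MeasureTheory Metric Filter Topology

/-- a Dirac–Weierstrass family extends continuous boundary functions
continuously to the compactification `Ȳ = Y ∪ Λ`: here `W` is the compactification,
`Λ` embeds in `W` as the closed boundary via `e`, and `Y = W \ e(Λ)` is the open part. -/
theorem stmt7 {Λ W : Type*} [MetricSpace Λ] [CompactSpace Λ]
    [MeasurableSpace Λ] [BorelSpace Λ]
    (ν : Measure Λ) [IsFiniteMeasure ν]
    [TopologicalSpace W] [CompactSpace W]
    (e : Λ → W) (he : Topology.IsEmbedding e) (hclosed : IsClosed (Set.range e))
    -- Dirac–Weierstrass family `K` on `Y × Λ`, `Y := (range e)ᶜ`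
    (K : W → Λ → ℝ)
    (hKcont : ContinuousOn (fun p : W × Λ => K p.1 p.2)
      ((Set.range e)ᶜ ×ˢ (Set.univ : Set Λ)))
    (hKpos : ∀ y ∉ Set.range e, ∀ v : Λ, 0 ≤ K y v)
    (hKnorm : ∀ y ∉ Set.range e, ∫ v, K y v ∂ν = 1)
    (hKconc : ∀ (v₀ : Λ) (r : ℝ), 0 < r →
      Tendsto (fun y => ∫ v in (ball v₀ r)ᶜ, K y v ∂ν)
        (𝓝[(Set.range e)ᶜ] (e v₀)) (𝓝 0))
    -- a continuous function on the boundary and its extension `h`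
    (f : Λ → ℂ) (hf : Continuous f)
    (h : W → ℂ)
    (hY : ∀ y ∉ Set.range e, h y = ∫ v, f v * (K y v : ℂ) ∂ν)
    (hΛ : ∀ l : Λ, h (e l) = f l) :
    Continuous h := by
  -- basic integrability facts
  have hkcont : ∀ y ∉ Set.range e, Continuous (fun v => K y v) := by
    intro y hy
    rw [← continuousOn_univ]
    exact hKcont.comp (Continuous.prodMk_right y).continuousOn
      (fun v _ => ⟨hy, Set.mem_univ v⟩)
  have hkint : ∀ y ∉ Set.range e, Integrable (fun v => K y v) ν := by
    intro y hy
    exact (hkcont y hy).integrable_of_hasCompactSupport (isClosed_tsupport _).isCompact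
  have hfint : ∀ y ∉ Set.range e, Integrable (fun v => f v * (K y v : ℂ)) ν := by
    intro y hy
    exact (hf.mul (Complex.continuous_ofReal.comp (hkcont y hy))).integrable_of_hasCompactSupport
      (isClosed_tsupport _).isCompact
  rw [continuous_iff_continuousAt]
  intro x
  by_cases hx : x ∈ Set.range e
  · -- boundary point
    obtain ⟨v₀, rfl⟩ := hx
    rw [ContinuousAt, hΛ]
    have hsplit : 𝓝 (e v₀) = 𝓝[(Set.range e)ᶜ] (e v₀) ⊔ 𝓝[Set.range e] (e v₀) := by
      rw [← nhdsWithin_union, Set.compl_union_self, nhdsWithin_univ]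
    rw [hsplit, tendsto_sup]
    constructor
    · -- from inside Y
      -- bound on f
      have : Nonempty Λ := ⟨v₀⟩
      obtain ⟨vm, hvm⟩ := hf.norm.exists_forall_ge (by rw [Filter.cocompact_eq_bot]; exact tendsto_bot)
      set M := ‖f vm‖ with hM
      have hM0 : 0 ≤ M := norm_nonneg _
      have hMb : ∀ v : Λ, ‖f v‖ ≤ M := hvm
      rw [Metric.tendsto_nhds]
      intro ε hε
      -- radius of continuity of f at v₀
      obtain ⟨r, hr, hrf⟩ := Metric.continuousAt_iff.1 (hf.continuousAt (x := v₀)) (ε / 2) (by linarith)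
      have hδ : 0 < ε / (4 * (M + 1)) := by positivity
      have hconc := (Metric.tendsto_nhds.1 (hKconc v₀ r hr)) (ε / (4 * (M + 1))) hδ
      filter_upwards [hconc, self_mem_nhdsWithin] with y hyc hyY
      have hy : y ∉ Set.range e := hyY
      have hky := hkcont y hy
      have hkiy := hkint y hy
      have hkpos := hKpos y hy
      -- rewrite the difference as one integral
      have hconst : Integrable (fun v => f v₀ * (K y v : ℂ)) ν :=
        (Integrable.const_mul ((hkint y hy).ofReal (𝕜 := ℂ)) (f v₀))
      have hval : h y - f v₀ = ∫ v, (f v - f v₀) * (K y v : ℂ) ∂ν := by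
        have h2 : ∫ v, f v₀ * (K y v : ℂ) ∂ν = f v₀ := by
          have hcast : ∫ v, ((K y v : ℝ) : ℂ) ∂ν = ((∫ v, K y v ∂ν : ℝ) : ℂ) :=
            integral_ofReal
          rw [MeasureTheory.integral_const_mul, hcast, hKnorm y hy]
          simp
        have h3 : ∫ v, (f v - f v₀) * (K y v : ℂ) ∂ν
            = (∫ v, f v * (K y v : ℂ) ∂ν) - ∫ v, f v₀ * (K y v : ℂ) ∂ν := by
          rw [← integral_sub (hfint y hy) hconst]
          congr 1; ext v; ring
        rw [hY y hy, h3, h2]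
      rw [dist_eq_norm, hval]
      -- bound the integral
      have hgcont : Continuous (fun v => ‖f v - f v₀‖ * K y v) :=
        ((hf.sub continuous_const).norm).mul hky
      have hgint : Integrable (fun v => ‖f v - f v₀‖ * K y v) ν :=
        hgcont.integrable_of_hasCompactSupport (isClosed_tsupport _).isCompact
      have hnorm : ‖∫ v, (f v - f v₀) * (K y v : ℂ) ∂ν‖
          ≤ ∫ v, ‖f v - f v₀‖ * K y v ∂ν := by
        refine le_trans (norm_integral_le_integral_norm _) (le_of_eq ?_)
        congr 1; ext v
        rw [norm_mul, Complex.norm_real, Real.norm_eq_abs, abs_of_nonneg (hkpos v)]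
      have hsplitint : ∫ v, ‖f v - f v₀‖ * K y v ∂ν
          = (∫ v in ball v₀ r, ‖f v - f v₀‖ * K y v ∂ν)
            + ∫ v in (ball v₀ r)ᶜ, ‖f v - f v₀‖ * K y v ∂ν :=
        (integral_add_compl measurableSet_ball hgint).symm
      -- near part
      have hnear : ∫ v in ball v₀ r, ‖f v - f v₀‖ * K y v ∂ν ≤ ε / 2 := by
        have h1 : ∫ v in ball v₀ r, ‖f v - f v₀‖ * K y v ∂ν
            ≤ ∫ v in ball v₀ r, (ε / 2) * K y v ∂ν := by
          refine setIntegral_mono_on hgint.integrableOn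
            ((hkiy.const_mul (ε / 2)).integrableOn) measurableSet_ball ?_
          intro v hv
          have := hrf (mem_ball.1 hv)
          rw [dist_eq_norm] at this
          exact mul_le_mul_of_nonneg_right this.le (hkpos v)
        have h2 : ∫ v in ball v₀ r, (ε / 2) * K y v ∂ν
            = (ε / 2) * ∫ v in ball v₀ r, K y v ∂ν := by
          rw [MeasureTheory.integral_const_mul]
        have h3 : ∫ v in ball v₀ r, K y v ∂ν ≤ ∫ v, K y v ∂ν :=
          setIntegral_le_integral hkiy (Filter.Eventually.of_forall hkpos)
        rw [hKnorm y hy] at h3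
        calc ∫ v in ball v₀ r, ‖f v - f v₀‖ * K y v ∂ν
            ≤ (ε / 2) * ∫ v in ball v₀ r, K y v ∂ν := h2 ▸ h1
          _ ≤ (ε / 2) * 1 := by
              exact mul_le_mul_of_nonneg_left h3 (by linarith)
          _ = ε / 2 := by ring
      -- far part
      have hfar : ∫ v in (ball v₀ r)ᶜ, ‖f v - f v₀‖ * K y v ∂ν
          < ε / 2 := by
        have h1 : ∫ v in (ball v₀ r)ᶜ, ‖f v - f v₀‖ * K y v ∂ν
            ≤ ∫ v in (ball v₀ r)ᶜ, (2 * (M + 1)) * K y v ∂ν := by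
          refine setIntegral_mono_on hgint.integrableOn
            ((hkiy.const_mul _).integrableOn) measurableSet_ball.compl ?_
          intro v _
          have : ‖f v - f v₀‖ ≤ 2 * (M + 1) := by
            calc ‖f v - f v₀‖ ≤ ‖f v‖ + ‖f v₀‖ := norm_sub_le _ _
              _ ≤ M + M := add_le_add (hMb v) (hMb v₀)
              _ ≤ 2 * (M + 1) := by linarith
          exact mul_le_mul_of_nonneg_right this (hkpos v)
        have h2 : ∫ v in (ball v₀ r)ᶜ, (2 * (M + 1)) * K y v ∂ν
            = (2 * (M + 1)) * ∫ v in (ball v₀ r)ᶜ, K y v ∂ν := by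
          rw [MeasureTheory.integral_const_mul]
        have h3 : ∫ v in (ball v₀ r)ᶜ, K y v ∂ν < ε / (4 * (M + 1)) := by
          rw [Real.dist_eq, sub_zero] at hyc
          exact lt_of_le_of_lt (le_abs_self _) hyc
        calc ∫ v in (ball v₀ r)ᶜ, ‖f v - f v₀‖ * K y v ∂ν
            ≤ (2 * (M + 1)) * ∫ v in (ball v₀ r)ᶜ, K y v ∂ν := h2 ▸ h1
          _ < (2 * (M + 1)) * (ε / (4 * (M + 1))) := by
              exact mul_lt_mul_of_pos_left h3 (by linarith)
          _ = ε / 2 := by field_simp; ring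
      calc ‖∫ v, (f v - f v₀) * (K y v : ℂ) ∂ν‖
          ≤ ∫ v, ‖f v - f v₀‖ * K y v ∂ν := hnorm
        _ = _ + _ := hsplitint
        _ < ε / 2 + ε / 2 := by exact add_lt_add_of_le_of_lt hnear hfar
        _ = ε := by ring
    · -- from the boundary
      rw [← he.map_nhds_eq, tendsto_map'_iff]
      have : (h ∘ e) = f := funext hΛ
      rw [this]
      exact hf.continuousAt
  · -- interior point
    rcases isEmpty_or_nonempty Λ with hemp | hne
    · exfalso
      have := hKnorm x hx
      rw [integral_of_isEmpty] at this
      norm_num at this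
    have hYopen : IsOpen ((Set.range e)ᶜ) := hclosed.isOpen_compl
    obtain ⟨vm, hvm⟩ := hf.norm.exists_forall_ge (by rw [Filter.cocompact_eq_bot]; exact tendsto_bot)
    set M := ‖f vm‖ with hM
    have hM0 : 0 ≤ M := norm_nonneg _
    have hMb : ∀ v : Λ, ‖f v‖ ≤ M := hvm
    set C := (M + 1) * ((ν Set.univ).toReal + 1) with hC
    have hC0 : 0 < C := by positivity
    rw [ContinuousAt, Metric.tendsto_nhds]
    intro ε hε
    have hδ : 0 < ε / (C + 1) := by positivity
    obtain ⟨U, hU, hUd⟩ := isCompact_univ.mem_uniformity_of_prod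
      (f := K) (s := (Set.range e)ᶜ) (q := x) hKcont hx (dist_mem_uniformity hδ)
    rw [hYopen.nhdsWithin_eq hx] at hU
    filter_upwards [hU, hYopen.mem_nhds hx] with y hyU hyY
    have hy : y ∉ Set.range e := hyY
    have hval : h y - h x = ∫ v, f v * ((K y v : ℂ) - (K x v : ℂ)) ∂ν := by
      rw [hY y hy, hY x hx, ← integral_sub (hfint y hy) (hfint x hx)]
      congr 1; ext v; ring
    rw [dist_eq_norm, hval]
    have hbound : ∀ v : Λ, ‖f v * ((K y v : ℂ) - (K x v : ℂ))‖ ≤ M * (ε / (C + 1)) := by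
      intro v
      rw [norm_mul]
      have h1 : ‖(K y v : ℂ) - (K x v : ℂ)‖ ≤ ε / (C + 1) := by
        rw [← Complex.ofReal_sub, Complex.norm_real, Real.norm_eq_abs, ← Real.dist_eq]
        exact (hUd y hyU v (Set.mem_univ v)).le
      exact mul_le_mul (hMb v) h1 (norm_nonneg _) hM0
    have hintnorm : ‖∫ v, f v * ((K y v : ℂ) - (K x v : ℂ)) ∂ν‖
        ≤ (M * (ε / (C + 1))) * (ν Set.univ).toReal := by
      refine le_trans (norm_integral_le_integral_norm _) ?_
      have h2 : ∫ v, ‖f v * ((K y v : ℂ) - (K x v : ℂ))‖ ∂ν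
          ≤ ∫ _, M * (ε / (C + 1)) ∂ν := by
        refine integral_mono ?_ (integrable_const _) hbound
        exact (hf.mul ((Complex.continuous_ofReal.comp (hkcont y hy)).sub
            (Complex.continuous_ofReal.comp (hkcont x hx)))).norm.integrable_of_hasCompactSupport
          (isClosed_tsupport _).isCompact
      rw [integral_const, smul_eq_mul, measureReal_def] at h2
      linarith [h2]
    refine lt_of_le_of_lt hintnorm ?_
    have hle : M * (ε / (C + 1)) * (ν Set.univ).toReal ≤ C * (ε / (C + 1)) := by
      rw [mul_comm (M * (ε / (C + 1))) _, ← mul_assoc]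
      refine mul_le_mul_of_nonneg_right ?_ (le_of_lt hδ)
      calc (ν Set.univ).toReal * M ≤ ((ν Set.univ).toReal + 1) * (M + 1) := by
            nlinarith [ENNReal.toReal_nonneg (a := ν Set.univ)]
        _ = C := by rw [hC]; ring
    refine lt_of_le_of_lt hle ?_

    calc C * (ε / (C + 1)) < (C + 1) * (ε / (C + 1)) := by
          exact mul_lt_mul_of_pos_right (by linarith) hδ
      _ = ε := by field_simp
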